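/- Let g : ℝ² → ℂ be Lebesgue integrable and radially symmetric, i.e., g(x) = G(‖x‖) for some function G : [0,∞) → ℂ. Then for every t ∈ ℝ², the Fourier transform ĝ(t) = ∫_{ℝ²} g(x) e^{-2πi x·t} dx satisfies ĝ(t) = 2π ∫₀^∞ r G(r) J₀(2π r ‖t‖) dr, where J₀(z) = ∑_{m=0}^{∞} (-1)^m z^{2m}/(4^m (m!)²). -/

import Mathlib

open MeasureTheory

/-- The Bessel function `J₀` of the first kind of order `0`, defined by its
power series `J₀(z) = ∑_{m=0}^∞ (-1)^m z^{2m} / (4^m (m!)²)`. -/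
noncomputable def besselJ0 (z : ℝ) : ℝ :=
  ∑' m : ℕ, (-1)^m * z^(2*m) / (4^m * (Nat.factorial m)^2)

open Real intervalIntegral Complex

lemma cos_pow_odd (m : ℕ) : ∫ x in (-π)..π, Real.cos x ^ (2*m+1) = 0 := by
  induction m with
  | zero => simp
  | succ n ih =>
    have := integral_cos_pow (a := -π) (b := π) (2*n+1)
    have h1 : 2*n+1+2 = 2*(n+1)+1 := by ring
    rw [h1] at this
    rw [this, ih]
    simp

lemma cos_pow_even (m : ℕ) :
    ∫ x in (-π)..π, Real.cos x ^ (2*m) = 2*π*(2*m).factorial / (4^m * (m.factorial)^2) := by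
  induction m with
  | zero => simp; ring
  | succ n ih =>
    have := integral_cos_pow (a := -π) (b := π) (2*n)
    have h1 : 2*n+2 = 2*(n+1) := by ring
    rw [h1] at this
    rw [this, ih]
    have h2 : ((2*(n+1)).factorial : ℝ) = (2*n+2)*(2*n+1)*(2*n).factorial := by
      rw [show 2*(n+1) = (2*n+1)+1 by ring, Nat.factorial_succ, Nat.factorial_succ]
      push_cast; ring
    have h3 : ((n+1).factorial : ℝ) = (n+1) * n.factorial := by
      rw [Nat.factorial_succ]; push_cast; ring
    rw [h2, h3]
    have h4 : (0:ℝ) < 4^n * (n.factorial)^2 := by positivity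
    have h5 : ((2*n:ℕ):ℝ) = 2*(n:ℝ) := by push_cast; ring
    simp only [Real.sin_pi, Real.sin_neg, neg_zero, mul_zero, sub_zero, zero_div, zero_add, h5]
    field_simp
    ring

lemma besselJ0_summable (z : ℝ) :
    Summable (fun m : ℕ => (-1:ℝ)^m * z^(2*m) / (4^m * (Nat.factorial m)^2)) := by
  apply Summable.of_norm
  have h : ∀ m : ℕ, ‖(-1:ℝ)^m * z^(2*m) / (4^m * (Nat.factorial m)^2)‖
      ≤ (z^2/4)^m / (Nat.factorial m) := by
    intro m
    rw [norm_div, norm_mul, norm_pow, norm_pow, norm_neg, norm_one, one_pow, one_mul]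
    rw [div_pow, pow_mul]
    have h1 : ‖(4:ℝ)^m * (Nat.factorial m)^2‖ = 4^m * (Nat.factorial m)^2 := by
      rw [Real.norm_eq_abs, abs_of_pos (by positivity)]
    rw [h1, Real.norm_eq_abs, _root_.sq_abs, div_div]
    apply div_le_div_of_nonneg_left (by positivity) (by positivity)
    have hf : (1:ℝ) ≤ (Nat.factorial m : ℝ) := Nat.one_le_cast.mpr m.factorial_pos
    have h4 : (0:ℝ) ≤ 4 ^ m := by positivity
    have h5 : (Nat.factorial m : ℝ) ≤ ((Nat.factorial m):ℝ)^2 := by nlinarith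
    exact mul_le_mul_of_nonneg_left h5 h4
  exact Summable.of_nonneg_of_le (fun m => norm_nonneg _) h (Real.summable_pow_div_factorial _)

lemma besselJ0_hasSum (z : ℝ) :
    HasSum (fun m : ℕ => (-1:ℝ)^m * z^(2*m) / (4^m * (Nat.factorial m)^2)) (besselJ0 z) :=
  (besselJ0_summable z).hasSum

lemma besselJ0_neg (z : ℝ) : besselJ0 (-z) = besselJ0 z := by
  unfold besselJ0
  congr 1; ext m
  rw [Even.neg_pow ⟨m, (two_mul m)⟩]

set_option maxHeartbeats 1000000 in
lemma integral_exp_I_cos (c : ℝ) :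
    ∫ θ in Set.Ioc (-π) π, Complex.exp ((c:ℂ) * Complex.I * (Real.cos θ : ℂ))
      = 2 * π * besselJ0 c := by
  set F : ℕ → ℝ → ℂ := fun n θ => ((c:ℂ) * Complex.I * (Real.cos θ : ℂ))^n / n.factorial with hF
  have hexp : ∀ θ : ℝ, Complex.exp ((c:ℂ) * Complex.I * (Real.cos θ : ℂ)) = ∑' n, F n θ := by
    intro θ
    rw [Complex.exp_eq_exp_ℂ, NormedSpace.exp_eq_tsum_div]
  have hFcont : ∀ n, Continuous (F n) := by
    intro n
    apply Continuous.div_const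
    exact (Continuous.mul continuous_const (Complex.continuous_ofReal.comp Real.continuous_cos)).pow n
  have hFint : ∀ n, IntegrableOn (F n) (Set.Ioc (-π) π) := fun n =>
    (hFcont n).integrableOn_Ioc
  have hFbound : ∀ n θ, ‖F n θ‖ ≤ |c|^n / n.factorial := by
    intro n θ
    rw [hF]
    simp only [norm_div, norm_pow, norm_mul, Complex.norm_real, Real.norm_eq_abs,
      Complex.norm_I, mul_one]
    rw [Complex.norm_natCast]
    gcongr
    calc |c| * |Real.cos θ| ≤ |c| * 1 :=
          mul_le_mul_of_nonneg_left (Real.abs_cos_le_one θ) (abs_nonneg c)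
      _ = |c| := mul_one _
  have hμ : volume (Set.Ioc (-π) π) < ⊤ := measure_Ioc_lt_top
  have hnorm_int : ∀ n, ∫ θ in Set.Ioc (-π) π, ‖F n θ‖ ≤ (2*π) * (|c|^n / n.factorial) := by
    intro n
    have h1 : ∫ θ in Set.Ioc (-π) π, ‖F n θ‖ ≤ (|c|^n / n.factorial) * (volume (Set.Ioc (-π) π)).toReal := by
      have := norm_setIntegral_le_of_norm_le_const_ae' hμ
        (f := fun θ => ‖F n θ‖) (C := |c|^n / n.factorial)
        (Filter.Eventually.of_forall (fun θ _ => by rw [norm_norm]; exact hFbound n θ))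
      calc ∫ θ in Set.Ioc (-π) π, ‖F n θ‖ ≤ ‖∫ θ in Set.Ioc (-π) π, ‖F n θ‖‖ := le_abs_self _
        _ ≤ _ := this
    rw [Real.volume_Ioc] at h1
    have h2 : (ENNReal.ofReal (π - -π)).toReal = 2 * π := by
      rw [ENNReal.toReal_ofReal (by linarith [pi_pos])]; ring
    rw [h2] at h1
    linarith [h1]
  have hsummable : Summable fun n => ∫ θ in Set.Ioc (-π) π, ‖F n θ‖ := by
    apply Summable.of_nonneg_of_le (fun n => integral_nonneg (fun θ => norm_nonneg _)) hnorm_int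
    exact ((Real.summable_pow_div_factorial |c|).mul_left _)
  have hswap := integral_tsum_of_summable_integral_norm (μ := volume.restrict (Set.Ioc (-π) π))
    hFint hsummable
  have hstep : ∫ θ in Set.Ioc (-π) π, Complex.exp ((c:ℂ) * Complex.I * (Real.cos θ : ℂ))
      = ∑' n, ∫ θ in Set.Ioc (-π) π, F n θ :=
    (setIntegral_congr_fun measurableSet_Ioc (fun θ _ => hexp θ)).trans hswap.symm
  rw [hstep]
  -- compute each term
  have hterm : ∀ n, ∫ θ in Set.Ioc (-π) π, F n θ
      = ((c:ℂ) * Complex.I)^n / n.factorial * ((∫ θ in (-π)..π, Real.cos θ ^ n : ℝ) : ℂ) := by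
    intro n
    rw [intervalIntegral.integral_of_le (by linarith [pi_pos] : -π ≤ π)]
    calc ∫ θ in Set.Ioc (-π) π, F n θ
        = ∫ θ in Set.Ioc (-π) π, ((c:ℂ)*Complex.I)^n / n.factorial * ((Real.cos θ ^ n : ℝ) : ℂ) := by
          apply setIntegral_congr_fun measurableSet_Ioc
          intro θ _
          rw [hF]
          push_cast
          ring
      _ = ((c:ℂ)*Complex.I)^n / n.factorial * ∫ θ in Set.Ioc (-π) π, ((Real.cos θ ^ n : ℝ) : ℂ) :=
          MeasureTheory.integral_const_mul _ _
      _ = ((c:ℂ)*Complex.I)^n / n.factorial * ((∫ θ in Set.Ioc (-π) π, Real.cos θ ^ n : ℝ) : ℂ) := by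
          have hcc := ContinuousLinearMap.integral_comp_comm Complex.ofRealCLM
            ((Real.continuous_cos.pow n).integrableOn_Ioc (μ := volume) (a := -π) (b := π))
          simp only [Complex.ofRealCLM_apply] at hcc
          exact congrArg (fun z => ((c:ℂ)*Complex.I)^n / n.factorial * z) hcc
  simp_rw [hterm]
  -- now the sum
  have heven : HasSum (fun m => ((c:ℂ) * Complex.I)^(2*m) / (2*m).factorial *
      ((∫ θ in (-π)..π, Real.cos θ ^ (2*m) : ℝ) : ℂ)) ((2 * π * besselJ0 c : ℝ) : ℂ) := by
    have h0 := Complex.ofRealCLM.hasSum (besselJ0_hasSum c)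
    simp only [Complex.ofRealCLM_apply] at h0
    have h1 := h0.mul_left ((2*π : ℝ) : ℂ)
    convert h1 using 2 with m
    · rfl
    · rw [cos_pow_even m]
      have hI : ((c:ℂ) * Complex.I)^(2*m) = (-1:ℂ)^m * (c:ℂ)^(2*m) := by
        rw [mul_pow, pow_mul Complex.I, Complex.I_sq]; ring
      rw [hI]
      have hfac : ((2*m).factorial : ℂ) ≠ 0 := by exact_mod_cast (2*m).factorial_ne_zero
      have h4a : ((4:ℂ))^m ≠ 0 := by norm_num
      have h4b : ((m.factorial : ℂ))^2 ≠ 0 := by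
        have : ((m.factorial : ℂ)) ≠ 0 := Nat.cast_ne_zero.mpr m.factorial_ne_zero
        exact pow_ne_zero 2 this
      push_cast
      field_simp
    · push_cast; ring
  have hodd : HasSum (fun m => ((c:ℂ) * Complex.I)^(2*m+1) / (2*m+1).factorial *
      ((∫ θ in (-π)..π, Real.cos θ ^ (2*m+1) : ℝ) : ℂ)) 0 := by
    have : (fun m : ℕ => ((c:ℂ) * Complex.I)^(2*m+1) / (2*m+1).factorial *
      ((∫ θ in (-π)..π, Real.cos θ ^ (2*m+1) : ℝ) : ℂ)) = fun _ => 0 := by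
      ext m; rw [cos_pow_odd m]; push_cast; ring
    rw [this]
    exact hasSum_zero
  have := HasSum.even_add_odd (f := fun n => ((c:ℂ) * Complex.I)^n / n.factorial *
      ((∫ θ in (-π)..π, Real.cos θ ^ n : ℝ) : ℂ)) heven hodd
  rw [add_zero] at this
  rw [this.tsum_eq]
  push_cast
  ring

lemma integral_exp_I_cos_sub (c φ : ℝ) :
    ∫ θ in Set.Ioo (-π) π, Complex.exp ((c:ℂ) * Complex.I * (Real.cos (θ - φ) : ℂ))
      = 2 * π * besselJ0 c := by
  have hle : -π ≤ π := by linarith [pi_pos]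
  have hper : Function.Periodic
      (fun x : ℝ => Complex.exp ((c:ℂ) * Complex.I * (Real.cos x : ℂ))) (2*π) :=
    Real.cos_periodic.comp (fun y => Complex.exp ((c:ℂ) * Complex.I * (y:ℂ)))
  rw [← integral_Ioc_eq_integral_Ioo, ← intervalIntegral.integral_of_le hle]
  have h1 : (∫ θ in (-π)..π,
      Complex.exp ((c:ℂ) * Complex.I * (Real.cos (θ - φ) : ℂ)))
      = ∫ θ in (-π - φ)..(π - φ), Complex.exp ((c:ℂ) * Complex.I * (Real.cos θ : ℂ)) :=
    intervalIntegral.integral_comp_sub_right (fun x => Complex.exp ((c:ℂ) * Complex.I * (Real.cos x : ℂ))) φ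
  rw [h1]
  have h2 : π - φ = (-π - φ) + 2*π := by ring
  have h3 : π = -π + 2*π := by ring
  rw [h2, hper.intervalIntegral_add_eq (-π - φ) (-π), ← h3,
    intervalIntegral.integral_of_le hle]
  exact integral_exp_I_cos c

lemma cos_decomp (a b θ : ℝ) :
    a * Real.cos θ + b * Real.sin θ
      = Real.sqrt (a^2+b^2) * Real.cos (θ - Complex.arg ⟨a, b⟩) := by
  set z : ℂ := ⟨a, b⟩ with hz
  rcases eq_or_ne z 0 with h0 | h0
  · have ha : a = 0 := congrArg Complex.re h0
    have hb : b = 0 := congrArg Complex.im h0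
    simp [ha, hb]
  · have habs : ‖z‖ = Real.sqrt (a^2+b^2) := by
      rw [Complex.norm_def, Complex.normSq_mk]
      ring_nf
    have hc := Complex.cos_arg h0
    have hs := Complex.sin_arg z
    rw [Real.cos_sub]
    rw [hc, hs]
    have hpos : Real.sqrt (a^2+b^2) ≠ 0 → True := fun _ => trivial
    rcases eq_or_ne (Real.sqrt (a^2+b^2)) 0 with hr | hr
    · exfalso
      have := Real.sqrt_eq_zero'.mp hr
      have ha : a = 0 ∧ b = 0 := by constructor <;> nlinarith
      refine h0 ?_
      rw [hz]
      exact Complex.ext (by simp [ha.1]) (by simp [ha.2])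
    · have : z.re = a := rfl
      have him : z.im = b := rfl
      rw [this, him, habs]
      field_simp


/-- If `g : ℝ² → ℂ` is integrable and radially symmetric, `g(x) = G(‖x‖)`, then
its Fourier transform satisfies `ĝ(t) = 2π ∫₀^∞ r G(r) J₀(2π r ‖t‖) dr`. -/
theorem stmt_7 (g : EuclideanSpace ℝ (Fin 2) → ℂ) (G : ℝ → ℂ)
    (hg : Integrable g) (hrad : ∀ x, g x = G ‖x‖)
    (t : EuclideanSpace ℝ (Fin 2)) :
    ∫ x : EuclideanSpace ℝ (Fin 2),
        g x * Complex.exp (-2 * (Real.pi : ℂ) * Complex.I * ((inner ℝ x t : ℝ) : ℂ)) =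
      2 * (Real.pi : ℂ) *
        ∫ r in Set.Ioi (0:ℝ), (r : ℂ) * G r * (besselJ0 (2 * Real.pi * r * ‖t‖) : ℂ) := by
  classical
  set ψ : EuclideanSpace ℝ (Fin 2) ≃ᵐ ℝ × ℝ :=
    (MeasurableEquiv.toLp 2 (Fin 2 → ℝ)).symm.trans (MeasurableEquiv.finTwoArrow) with hψdef
  have hψ : MeasurePreserving ψ :=
    (volume_preserving_finTwoArrow ℝ).comp (EuclideanSpace.volume_preserving_symm_measurableEquiv_toLp (Fin 2))
  set F : ℝ × ℝ → ℂ := fun p =>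
    G (Real.sqrt (p.1^2 + p.2^2)) *
      Complex.exp (-2 * (π:ℂ) * Complex.I * ((p.1 * t 0 + p.2 * t 1 : ℝ) : ℂ)) with hFdef
  have hψ_apply : ∀ x : EuclideanSpace ℝ (Fin 2), ψ x = (x 0, x 1) := fun x => rfl
  have hnorm : ∀ x : EuclideanSpace ℝ (Fin 2), ‖x‖ = Real.sqrt ((x 0)^2 + (x 1)^2) := by
    intro x
    rw [EuclideanSpace.norm_eq]
    simp [Fin.sum_univ_two, sq_abs]
  have hinner : ∀ x : EuclideanSpace ℝ (Fin 2), (inner ℝ x t : ℝ) = x 0 * t 0 + x 1 * t 1 := by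
    intro x
    simp [PiLp.inner_apply, Fin.sum_univ_two, RCLike.inner_apply, conj_trivial]
    ring
  have hcomp : ∀ x, F (ψ x)
      = g x * Complex.exp (-2 * (π:ℂ) * Complex.I * ((inner ℝ x t : ℝ) : ℂ)) := by
    intro x
    rw [hψ_apply, hFdef]
    simp only
    rw [← hnorm, ← hrad, hinner]
  -- integrability
  have hexp_cont : Continuous fun x : EuclideanSpace ℝ (Fin 2) =>
      Complex.exp (-2 * (π:ℂ) * Complex.I * ((inner ℝ x t : ℝ) : ℂ)) := by
    apply Complex.continuous_exp.comp
    apply Continuous.mul continuous_const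
    exact Complex.continuous_ofReal.comp (continuous_id.inner continuous_const)
  have hgint : Integrable (fun x => g x *
      Complex.exp (-2 * (π:ℂ) * Complex.I * ((inner ℝ x t : ℝ) : ℂ))) := by
    have := hg.bdd_mul (c := 1) hexp_cont.aestronglyMeasurable (Filter.Eventually.of_forall fun x => by
      have : (-2 * (π:ℂ) * Complex.I * ((inner ℝ x t : ℝ) : ℂ))
          = ((-2 * π * (inner ℝ x t : ℝ) : ℝ) : ℂ) * Complex.I := by push_cast; ring
      rw [this, Complex.norm_exp, Complex.mul_I_re]
      simp)
    exact this.congr (Filter.Eventually.of_forall fun x => mul_comm _ _)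
  have hFint : Integrable F := by
    rw [← hψ.integrable_comp_emb ψ.measurableEmbedding]
    exact hgint.congr (Filter.Eventually.of_forall fun x => (hcomp x).symm)
  -- step 1 : transfer to ℝ × ℝ
  have step1 : ∫ x : EuclideanSpace ℝ (Fin 2),
      g x * Complex.exp (-2 * (π:ℂ) * Complex.I * ((inner ℝ x t : ℝ) : ℂ)) = ∫ p, F p := by
    rw [← hψ.integral_comp ψ.measurableEmbedding F]
    exact integral_congr_ae (Filter.Eventually.of_forall fun x => (hcomp x).symm)
  rw [step1]
  -- step 2 : polar coordinates
  rw [← integral_comp_polarCoord_symm F]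
  -- integrability on target
  have hBdet : ∀ p : ℝ × ℝ, ((LinearMap.toContinuousLinearMap (Matrix.toLin (Module.Basis.finTwoProd ℝ)
      (Module.Basis.finTwoProd ℝ) !![Real.cos p.2, -p.1 * Real.sin p.2;
        Real.sin p.2, p.1 * Real.cos p.2])).det) = p.1 := by
    intro p
    conv_rhs => rw [← one_mul p.1, ← Real.cos_sq_add_sin_sq p.2]
    simp only [neg_mul, LinearMap.det_toContinuousLinearMap, LinearMap.det_toLin,
      Matrix.det_fin_two_of, sub_neg_eq_add]
    ring
  have htarget_meas : MeasurableSet polarCoord.target := by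
    rw [polarCoord_target]
    exact measurableSet_Ioi.prod measurableSet_Ioo
  have hIntOn : IntegrableOn (fun p : ℝ × ℝ => p.1 • F (polarCoord.symm p))
      polarCoord.target := by
    have h1 := (integrableOn_image_iff_integrableOn_abs_det_fderiv_smul volume htarget_meas
      (fun p _ => (hasFDerivAt_polarCoord_symm p).hasFDerivWithinAt)
      (polarCoord.symm.injOn) F)
    rw [polarCoord.symm_image_target_eq_source] at h1
    have h2 := h1.mp (hFint.integrableOn)
    apply h2.congr_fun ?_ htarget_meas
    intro p hp
    rw [polarCoord_target] at hp
    have hp1 : 0 < p.1 := hp.1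
    simp only [hBdet, det_fderivPolarCoordSymm, abs_of_pos hp1]
  -- step 3 : Fubini
  rw [polarCoord_target] at hIntOn ⊢
  rw [Measure.volume_eq_prod] at hIntOn ⊢
  rw [setIntegral_prod _ hIntOn]
  -- step 4 : inner integral
  have hφ : ∀ r ∈ Set.Ioi (0:ℝ), ∫ θ in Set.Ioo (-π) π,
      (fun p : ℝ × ℝ => p.1 • F (polarCoord.symm p)) (r, θ)
      = 2 * (π:ℂ) * ((r:ℂ) * G r * (besselJ0 (2 * π * r * ‖t‖) : ℂ)) := by
    intro r hr
    have hr' : 0 < r := hr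
    have hnt : ‖t‖ = Real.sqrt ((t 0)^2 + (t 1)^2) := by
      rw [EuclideanSpace.norm_eq]
      simp [Fin.sum_univ_two, sq_abs]
    set φ := Complex.arg ⟨t 0, t 1⟩ with hφdef
    have key : ∀ θ : ℝ, (fun p : ℝ × ℝ => p.1 • F (polarCoord.symm p)) (r, θ)
        = ((r:ℂ) * G r) * Complex.exp (((-(2 * π * r * ‖t‖) : ℝ) : ℂ) * Complex.I
            * ((Real.cos (θ - φ) : ℝ) : ℂ)) := by
      intro θ
      simp only [polarCoord_symm_apply, hFdef, smul_eq_mul]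
      have hsq : (r * Real.cos θ)^2 + (r * Real.sin θ)^2 = r^2 := by
        have := Real.sin_sq_add_cos_sq θ
        nlinarith
      rw [hsq, Real.sqrt_sq hr'.le]
      have hdc : r * Real.cos θ * t 0 + r * Real.sin θ * t 1
          = r * (‖t‖ * Real.cos (θ - φ)) := by
        have := cos_decomp (t 0) (t 1) θ
        rw [← hφdef, ← hnt] at this
        nlinarith [this]
      have hexp_eq : (-2 * (π:ℂ) * Complex.I * ((r * Real.cos θ * t 0 + r * Real.sin θ * t 1 : ℝ) : ℂ))
          = ((-(2 * π * r * ‖t‖) : ℝ) : ℂ) * Complex.I * ((Real.cos (θ - φ) : ℝ) : ℂ) := by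
        rw [hdc]
        push_cast
        ring
      rw [hexp_eq, Complex.real_smul]
      ring
    calc ∫ θ in Set.Ioo (-π) π, (fun p : ℝ × ℝ => p.1 • F (polarCoord.symm p)) (r, θ)
        = ∫ θ in Set.Ioo (-π) π, ((r:ℂ) * G r) *
            Complex.exp (((-(2 * π * r * ‖t‖) : ℝ) : ℂ) * Complex.I
              * ((Real.cos (θ - φ) : ℝ) : ℂ)) :=
          setIntegral_congr_fun measurableSet_Ioo (fun θ _ => key θ)
      _ = ((r:ℂ) * G r) * ∫ θ in Set.Ioo (-π) π,
            Complex.exp (((-(2 * π * r * ‖t‖) : ℝ) : ℂ) * Complex.I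
              * ((Real.cos (θ - φ) : ℝ) : ℂ)) := MeasureTheory.integral_const_mul _ _
      _ = ((r:ℂ) * G r) * (2 * π * besselJ0 (-(2 * π * r * ‖t‖))) := by
          rw [integral_exp_I_cos_sub (-(2 * π * r * ‖t‖)) φ]
      _ = 2 * (π:ℂ) * ((r:ℂ) * G r * (besselJ0 (2 * π * r * ‖t‖) : ℂ)) := by
          rw [besselJ0_neg]
          ring
  rw [setIntegral_congr_fun measurableSet_Ioi hφ]
  rw [MeasureTheory.integral_const_mul]
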